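/- Let ζ ∈ ℂ² be a nonzero Majorana spinor, let a,b ∈ ℝ with (a,b) ≠ (0,0), and set χ = a·ζ + b·(i·σ₃)·ζ. Then χ is a nonzero Majorana spinor, N(χ) = (a² + b²)·N(ζ), and the bilinear vector of χ is a rotation of that of ζ: X₁(χ) = ((a² − b²)·X₁(ζ) + 2ab·X₂(ζ))/(a² + b²) and X₂(χ) = (−2ab·X₁(ζ) + (a² − b²)·X₂(ζ))/(a² + b²); in particular X₁(χ)² + X₂(χ)² = 1. -/

import Mathlib

open Matrix Complex

noncomputable section

/-- Pauli matrix σ₁. -/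
def σ1 : Matrix (Fin 2) (Fin 2) ℂ := !![0, 1; 1, 0]
/-- Pauli matrix σ₂. -/
def σ2 : Matrix (Fin 2) (Fin 2) ℂ := !![0, -I; I, 0]
/-- Pauli matrix σ₃. -/
def σ3 : Matrix (Fin 2) (Fin 2) ℂ := !![1, 0; 0, -1]

/-- A spinor ζ ∈ ℂ² is Majorana if conj(ζ) = i σ₁ ζ componentwise. -/
def IsMajorana (ζ : Fin 2 → ℂ) : Prop := star ζ = (I • σ1).mulVec ζ

/-- The bilinear N(ζ) = ζ†ζ. -/
def Nbil (ζ : Fin 2 → ℂ) : ℂ := star ζ ⬝ᵥ ζ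

/-- The bilinear X₁(ζ) = (ζ†σ₁ζ)/N(ζ). -/
def X1 (ζ : Fin 2 → ℂ) : ℂ := (star ζ ⬝ᵥ σ1.mulVec ζ) / Nbil ζ

/-- The bilinear X₂(ζ) = (ζ†σ₂ζ)/N(ζ). -/
def X2 (ζ : Fin 2 → ℂ) : ℂ := (star ζ ⬝ᵥ σ2.mulVec ζ) / Nbil ζ

/-- Combining fractions over a common denominator. -/
lemma comb_frac (p q x y n d : ℂ) (hn : n ≠ 0) (hd : d ≠ 0) :
    (p * (x / n) + q * (y / n)) / d = (p * x + q * y) / (d * n) := by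
  rw [mul_comm d n, mul_div_assoc', mul_div_assoc', ← add_div, div_div]

/-- Scalar values of the bilinears for a Majorana spinor. -/
lemma maj_vals (ξ : Fin 2 → ℂ) (h0 : (starRingEnd ℂ) (ξ 0) = I * ξ 1)
    (h1 : (starRingEnd ℂ) (ξ 1) = I * ξ 0) :
    Nbil ξ = 2 * I * ξ 0 * ξ 1 ∧
    (star ξ ⬝ᵥ σ1.mulVec ξ) = I * (ξ 0 ^ 2 + ξ 1 ^ 2) ∧
    (star ξ ⬝ᵥ σ2.mulVec ξ) = ξ 1 ^ 2 - ξ 0 ^ 2 := by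
  refine ⟨?_, ?_, ?_⟩
  · simp only [Nbil, dotProduct, Fin.sum_univ_two, Pi.star_apply, RCLike.star_def, h0, h1]
    ring
  · simp [σ1, mulVec, dotProduct, Fin.sum_univ_two, h0, h1]
    ring
  · simp [σ2, mulVec, dotProduct, Fin.sum_univ_two, h0, h1]
    linear_combination (ξ 0 ^ 2 - ξ 1 ^ 2) * I_sq

/-- A nonzero Majorana spinor has unit bilinear vector. -/
lemma maj_unit (ξ : Fin 2 → ℂ) (h0 : (starRingEnd ℂ) (ξ 0) = I * ξ 1)
    (h1 : (starRingEnd ℂ) (ξ 1) = I * ξ 0) (hc0 : ξ 0 ≠ 0) (hc1 : ξ 1 ≠ 0) :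
    X1 ξ ^ 2 + X2 ξ ^ 2 = 1 := by
  obtain ⟨hN, hn1, hn2⟩ := maj_vals ξ h0 h1
  have hN0 : Nbil ξ ≠ 0 := by
    rw [hN]; simp [hc0, hc1, I_ne_zero]
  have key : (I * (ξ 0 ^ 2 + ξ 1 ^ 2)) ^ 2 + (ξ 1 ^ 2 - ξ 0 ^ 2) ^ 2
      = (2 * I * ξ 0 * ξ 1) ^ 2 := by
    linear_combination (ξ 0 ^ 2 - ξ 1 ^ 2) ^ 2 * I_sq
  rw [X1, X2, hn1, hn2, div_pow, div_pow, ← add_div, hN, key,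
    div_self (pow_ne_zero _ (hN ▸ hN0))]

/-- Let ζ be a nonzero Majorana spinor, (a,b) ≠ (0,0) real, and χ = a·ζ + b·(iσ₃)ζ. Then
χ is a nonzero Majorana spinor, N(χ) = (a² + b²)N(ζ), and the bilinear vector of χ is a
rotation of that of ζ; in particular it is still a unit vector. -/
theorem majorana_bilinear_rotation (ζ : Fin 2 → ℂ) (hζ : ζ ≠ 0) (hM : IsMajorana ζ)
    (a b : ℝ) (hab : (a, b) ≠ (0, 0)) :
    let χ : Fin 2 → ℂ := (a : ℂ) • ζ + (b : ℂ) • (I • σ3).mulVec ζ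
    χ ≠ 0 ∧ IsMajorana χ ∧
    Nbil χ = ((a ^ 2 + b ^ 2 : ℝ) : ℂ) * Nbil ζ ∧
    X1 χ = (((a ^ 2 - b ^ 2 : ℝ) : ℂ) * X1 ζ + ((2 * a * b : ℝ) : ℂ) * X2 ζ)
      / ((a ^ 2 + b ^ 2 : ℝ) : ℂ) ∧
    X2 χ = (-((2 * a * b : ℝ) : ℂ) * X1 ζ + ((a ^ 2 - b ^ 2 : ℝ) : ℂ) * X2 ζ)
      / ((a ^ 2 + b ^ 2 : ℝ) : ℂ) ∧
    X1 χ ^ 2 + X2 χ ^ 2 = 1 := by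
  intro χ
  have h0 : (starRingEnd ℂ) (ζ 0) = I * ζ 1 := by
    have := congrFun hM 0
    simpa [σ1, mulVec, dotProduct, Fin.sum_univ_two] using this
  have h1 : (starRingEnd ℂ) (ζ 1) = I * ζ 0 := by
    have := congrFun hM 1
    simpa [σ1, mulVec, dotProduct, Fin.sum_univ_two] using this
  have hc0 : ζ 0 ≠ 0 := by
    intro h
    apply hζ
    have h1' : ζ 1 = 0 := by
      have := h1
      rw [h] at this
      simpa using (starRingEnd ℂ).injective (by simpa using this)
    funext i; fin_cases i <;> simp [h, h1']
  have hc1 : ζ 1 ≠ 0 := by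
    intro h
    apply hc0
    have := h0
    rw [h] at this
    simpa using (starRingEnd ℂ).injective (by simpa using this)
  have hab' : a ≠ 0 ∨ b ≠ 0 := by
    by_contra h
    push_neg at h
    exact hab (by simp [h.1, h.2])
  have hD : ((a ^ 2 + b ^ 2 : ℝ) : ℂ) ≠ 0 := by
    have : (0:ℝ) < a ^ 2 + b ^ 2 := by
      rcases hab' with h | h <;> positivity
    exact_mod_cast this.ne'
  -- components of χ
  have hχ0 : χ 0 = ((a : ℂ) + I * b) * ζ 0 := by
    simp [χ, σ3, mulVec, dotProduct, Fin.sum_univ_two, vecHead, vecTail]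
    ring
  have hχ1 : χ 1 = ((a : ℂ) - I * b) * ζ 1 := by
    simp [χ, σ3, mulVec, dotProduct, Fin.sum_univ_two, vecHead, vecTail]
    ring
  have hsq : ((a:ℂ) + I * b) * ((a:ℂ) - I * b) = ((a ^ 2 + b ^ 2 : ℝ) : ℂ) := by
    push_cast
    linear_combination -(b:ℂ) ^ 2 * I_sq
  have hw : ((a : ℂ) + I * b) ≠ 0 := fun h => hD (by rw [← hsq, h, zero_mul])
  have hw' : ((a : ℂ) - I * b) ≠ 0 := fun h => hD (by rw [← hsq, h, mul_zero])
  -- χ is Majorana (componentwise)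
  have hs0 : (starRingEnd ℂ) (χ 0) = I * χ 1 := by
    rw [hχ0, hχ1, _root_.map_mul, h0]
    simp [map_add, _root_.map_mul, conj_I, Complex.conj_ofReal]
    ring
  have hs1 : (starRingEnd ℂ) (χ 1) = I * χ 0 := by
    rw [hχ1, hχ0, _root_.map_mul, h1]
    simp [map_sub, _root_.map_mul, conj_I, Complex.conj_ofReal]
    ring
  have hχc0 : χ 0 ≠ 0 := by rw [hχ0]; exact mul_ne_zero hw hc0
  have hχc1 : χ 1 ≠ 0 := by rw [hχ1]; exact mul_ne_zero hw' hc1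
  obtain ⟨hNζ, hn1ζ, hn2ζ⟩ := maj_vals ζ h0 h1
  obtain ⟨hNχ', hn1χ, hn2χ⟩ := maj_vals χ hs0 hs1
  have hNζ0 : Nbil ζ ≠ 0 := by rw [hNζ]; simp [hc0, hc1, I_ne_zero]
  -- N(χ)
  have hNχ : Nbil χ = ((a ^ 2 + b ^ 2 : ℝ) : ℂ) * Nbil ζ := by
    rw [hNχ', hχ0, hχ1, hNζ, ← hsq]
    ring
  have hNχ0 : Nbil χ ≠ 0 := by rw [hNχ]; exact mul_ne_zero hD hNζ0
  refine ⟨fun h => hχc0 (by rw [h]; rfl), ?_, hNχ, ?_, ?_,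
    maj_unit χ hs0 hs1 hχc0 hχc1⟩
  · funext i
    fin_cases i
    · show (starRingEnd ℂ) (χ 0) = _
      simpa [σ1, mulVec, dotProduct, Fin.sum_univ_two] using hs0
    · show (starRingEnd ℂ) (χ 1) = _
      simpa [σ1, mulVec, dotProduct, Fin.sum_univ_two] using hs1
  · rw [X1, X1, X2, hn1χ, hn1ζ, hn2ζ, hNχ, hNζ, hχ0, hχ1]
    have hden : (2 * I * ζ 0 * ζ 1 : ℂ) ≠ 0 := by simp [hc0, hc1, I_ne_zero]
    have hR : (((a ^ 2 - b ^ 2 : ℝ) : ℂ) * (I * (ζ 0 ^ 2 + ζ 1 ^ 2) / (2 * I * ζ 0 * ζ 1)) +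
          ((2 * a * b : ℝ) : ℂ) * ((ζ 1 ^ 2 - ζ 0 ^ 2) / (2 * I * ζ 0 * ζ 1))) /
          ((a ^ 2 + b ^ 2 : ℝ) : ℂ)
        = (((a ^ 2 - b ^ 2 : ℝ) : ℂ) * (I * (ζ 0 ^ 2 + ζ 1 ^ 2)) +
            ((2 * a * b : ℝ) : ℂ) * (ζ 1 ^ 2 - ζ 0 ^ 2)) /
          (((a ^ 2 + b ^ 2 : ℝ) : ℂ) * (2 * I * ζ 0 * ζ 1)) :=
      comb_frac _ _ _ _ _ _ hden hD
    rw [hR]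
    congr 1
    push_cast
    linear_combination ((2 * a * b + (b:ℂ) ^ 2 * I) * ζ 0 ^ 2
      + ((b:ℂ) ^ 2 * I - 2 * a * b) * ζ 1 ^ 2) * I_sq
  · rw [X2, X1, X2, hn2χ, hn1ζ, hn2ζ, hNχ, hNζ, hχ0, hχ1]
    have hden : (2 * I * ζ 0 * ζ 1 : ℂ) ≠ 0 := by simp [hc0, hc1, I_ne_zero]
    have hR : (-((2 * a * b : ℝ) : ℂ) * (I * (ζ 0 ^ 2 + ζ 1 ^ 2) / (2 * I * ζ 0 * ζ 1)) +
          ((a ^ 2 - b ^ 2 : ℝ) : ℂ) * ((ζ 1 ^ 2 - ζ 0 ^ 2) / (2 * I * ζ 0 * ζ 1))) /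
          ((a ^ 2 + b ^ 2 : ℝ) : ℂ)
        = (-((2 * a * b : ℝ) : ℂ) * (I * (ζ 0 ^ 2 + ζ 1 ^ 2)) +
            ((a ^ 2 - b ^ 2 : ℝ) : ℂ) * (ζ 1 ^ 2 - ζ 0 ^ 2)) /
          (((a ^ 2 + b ^ 2 : ℝ) : ℂ) * (2 * I * ζ 0 * ζ 1)) :=
      comb_frac _ _ _ _ _ _ hden hD
    rw [hR]
    congr 1
    push_cast
    linear_combination ((b:ℂ) ^ 2 * (ζ 1 ^ 2 - ζ 0 ^ 2)) * I_sq
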